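/- Fix principal curvatures κ_1,…,κ_{n−1} with H = Σ_α κ_α and a real number φ_n, for n ≥ 2. Then (i/(2π)^n) ∫_{ℝ^{n−1}} ∫_C e^{−τ} [ (w_1−τ)^{−2} ( (1/2)(H + φ_n) − (1/2) w_1^{−2} Σ_α κ_α ξ_α² ) ] dτ dξ′ = (ω_{n−2} Γ(n−1)/(2(2π)^{n−1})) ( (n−2)H/(n−1) + φ_n ), where w_1 = |ξ′| and C is a contour around the positive real axis. -/

import Mathlib

open Real MeasureTheory Metric
open scoped NNReal

section helpers

lemma cauchy_sq_aux (c : ℂ) {r : ℝ} (hr : 0 < r) :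
    (∮ τ in C(c, r), Complex.exp (-τ) * (c - τ) ^ (-2 : ℤ))
      = -(2 * π * Complex.I) * Complex.exp (-c) := by
  have hdiff : Differentiable ℂ (fun τ : ℂ => Complex.exp (-τ)) :=
    (Complex.differentiable_exp.comp differentiable_neg)
  have hR : (0 : ℝ≥0) < r.toNNReal := by simpa using hr
  have hfp := (hdiff.hasFPowerSeriesOnBall c hR).hasFPowerSeriesAt
  have hd : deriv (fun τ : ℂ => Complex.exp (-τ)) c = -Complex.exp (-c) := by
    have : HasDerivAt (fun τ : ℂ => Complex.exp (-τ)) (-Complex.exp (-c)) c := by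
      simpa [Function.comp_def] using (Complex.hasDerivAt_exp (-c)).comp c (hasDerivAt_neg c)
    exact this.deriv
  have h1 := hfp.deriv
  rw [hd, cauchyPowerSeries_apply] at h1
  have h2 : (∮ z in C(c, ↑r.toNNReal), (1 / (z - c)) ^ 1 • (z - c)⁻¹ • Complex.exp (-z))
      = ∮ τ in C(c, r), Complex.exp (-τ) * (c - τ) ^ (-2 : ℤ) := by
    rw [Real.coe_toNNReal r hr.le]
    congr 1
    funext z
    simp only [pow_one, smul_eq_mul, one_div]
    rw [show ((-2:ℤ)) = (-(2:ℕ) : ℤ) from rfl, zpow_neg, zpow_natCast]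
    rw [show (c - z)^(2:ℕ) = (z - c)^(2:ℕ) by ring, sq, mul_inv]
    ring
  rw [h2] at h1
  have h2πI : (2 * (π:ℂ) * Complex.I) ≠ 0 := by
    simp [Real.pi_ne_zero, Complex.I_ne_zero, Complex.ofReal_ne_zero]
  rw [smul_eq_mul, eq_comm, inv_mul_eq_iff_eq_mul₀ h2πI] at h1
  rw [h1]; ring

lemma contour_const_aux (c : ℝ) {r : ℝ} (hr : 0 < r) (A : ℂ) :
    (∮ τ in C((c:ℂ), r), Complex.exp (-τ) * (((c:ℂ) - τ) ^ (-2 : ℤ) * A))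
      = -(2 * π * Complex.I) * Complex.exp (-(c:ℂ)) * A :=
  calc (∮ τ in C((c:ℂ), r), Complex.exp (-τ) * (((c:ℂ) - τ) ^ (-2 : ℤ) * A))
      = ∮ τ in C((c:ℂ), r), (Complex.exp (-τ) * ((c:ℂ) - τ) ^ (-2 : ℤ)) • A := by
        congr 1; funext τ; rw [smul_eq_mul]; ring
    _ = (∮ τ in C((c:ℂ), r), Complex.exp (-τ) * ((c:ℂ) - τ) ^ (-2 : ℤ)) • A :=
        circleIntegral.integral_smul_const _ A _ r
    _ = -(2 * π * Complex.I) * Complex.exp (-(c:ℂ)) * A := by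
        rw [cauchy_sq_aux (c:ℂ) hr, smul_eq_mul]

lemma one_add_pow_le_exp_aux (m : ℕ) {t : ℝ} (ht : 0 ≤ t) :
    (1 + t) ^ m ≤ (m.factorial : ℝ) * Real.exp t := by
  rw [add_pow]
  have h1 : ∀ k ∈ Finset.range (m + 1),
      (1:ℝ) ^ k * t ^ (m - k) * (m.choose k : ℝ)
        ≤ (m.factorial : ℝ) * (t ^ (m - k) / (m - k).factorial) := by
    intro k hk
    rw [one_pow, one_mul]
    rw [div_eq_mul_inv, ← mul_assoc, mul_comm ((m.factorial : ℝ)), mul_assoc]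
    apply mul_le_mul_of_nonneg_left _ (pow_nonneg ht _)
    rw [le_mul_inv_iff₀ (by positivity)]
    have := Nat.choose_mul_factorial_mul_factorial (Nat.lt_succ_iff.mp (Finset.mem_range.mp hk))
    calc (m.choose k : ℝ) * ((m - k).factorial : ℝ)
        ≤ (m.choose k : ℝ) * ((m-k).factorial : ℝ) * (k.factorial : ℝ) := by
          nlinarith [Nat.one_le_iff_ne_zero.mpr (Nat.factorial_ne_zero k),
            (by positivity : (0:ℝ) ≤ (m.choose k : ℝ) * ((m-k).factorial : ℝ)),
            (Nat.one_le_cast (α := ℝ)).mpr (Nat.one_le_iff_ne_zero.mpr (Nat.factorial_ne_zero k))]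
      _ = (m.factorial : ℝ) := by
          rw [← Nat.cast_mul, ← Nat.cast_mul]
          norm_cast
          rw [mul_right_comm]
          exact this
  calc ∑ k ∈ Finset.range (m + 1), (1:ℝ) ^ k * t ^ (m - k) * (m.choose k : ℝ)
      ≤ ∑ k ∈ Finset.range (m + 1), (m.factorial : ℝ) * (t ^ (m - k) / (m - k).factorial) :=
        Finset.sum_le_sum h1
    _ = (m.factorial : ℝ) * ∑ k ∈ Finset.range (m + 1), t ^ (m - k) / (m - k).factorial := by
        rw [Finset.mul_sum]
    _ = (m.factorial : ℝ) * ∑ k ∈ Finset.range (m + 1), t ^ k / k.factorial := by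
        rw [← Finset.sum_range_reflect (fun k => t ^ k / (k.factorial : ℝ)) (m+1)]
        simp
    _ ≤ (m.factorial : ℝ) * Real.exp t := by
        apply mul_le_mul_of_nonneg_left (Real.sum_le_exp_of_nonneg ht _) (by positivity)

lemma integrable_exp_neg_norm_aux {E : Type*} [NormedAddCommGroup E] [NormedSpace ℝ E]
    [FiniteDimensional ℝ E] [MeasurableSpace E] [BorelSpace E]
    (μ : Measure E) [μ.IsAddHaarMeasure] :
    Integrable (fun x : E => Real.exp (-‖x‖)) μ := by
  set d : ℕ := Module.finrank ℝ E with hd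
  have hint := (integrable_one_add_norm (μ := μ) (r := (d + 1 : ℝ)) (by rw [← hd]; linarith)).const_mul
    ((d + 1).factorial : ℝ)
  refine hint.mono' ?_ ?_
  · exact (Real.continuous_exp.comp continuous_norm.neg).aestronglyMeasurable
  · filter_upwards with x
    rw [Real.norm_eq_abs, abs_of_pos (Real.exp_pos _), Real.exp_neg]
    have h1 : (1 + ‖x‖) ^ (-(d + 1 : ℝ)) = ((1 + ‖x‖) ^ (d + 1 : ℕ))⁻¹ := by
      rw [Real.rpow_neg (by positivity), ← Real.rpow_natCast (1 + ‖x‖) (d+1)]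
      norm_num
    have ha : (0:ℝ) < (1 + ‖x‖) ^ (d + 1) := by positivity
    have he := Real.exp_pos ‖x‖
    have key := one_add_pow_le_exp_aux (d + 1) (norm_nonneg x)
    rw [h1, ← div_eq_mul_inv, ← one_div, div_le_div_iff₀ he ha, one_mul]
    linarith

lemma radial_exp_aux (m : ℕ) (hm : 1 ≤ m) :
    ∫ x : EuclideanSpace ℝ (Fin m), Real.exp (-‖x‖)
      = (2 * π ^ ((m:ℝ)/2) / Real.Gamma ((m:ℝ)/2)) * Real.Gamma (m:ℝ) := by
  haveI : Nonempty (Fin m) := ⟨⟨0, hm⟩⟩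
  haveI : Nontrivial (EuclideanSpace ℝ (Fin m)) := by
    unfold EuclideanSpace; infer_instance
  rw [MeasureTheory.integral_fun_norm_addHaar (volume : Measure (EuclideanSpace ℝ (Fin m)))
    (fun r => Real.exp (-r))]
  have hdim : Module.finrank ℝ (EuclideanSpace ℝ (Fin m)) = m := by
    simp [finrank_euclideanSpace]
  rw [hdim]
  have hvol : ((volume : Measure (EuclideanSpace ℝ (Fin m))) (ball 0 1)).toReal
      = Real.sqrt π ^ m / Real.Gamma ((m:ℝ)/2 + 1) := by
    rw [EuclideanSpace.volume_ball]
    simp only [Fintype.card_fin, ENNReal.ofReal_one, one_pow, one_mul]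
    rw [ENNReal.toReal_ofReal (by positivity)]
  rw [measureReal_def, hvol]
  have hIoi : (∫ y in Set.Ioi (0:ℝ), y ^ (m - 1) • Real.exp (-y)) = Real.Gamma (m:ℝ) := by
    rw [Real.Gamma_eq_integral (by positivity : (0:ℝ) < (m:ℝ))]
    apply setIntegral_congr_fun measurableSet_Ioi
    intro y hy
    simp only [smul_eq_mul]
    rw [mul_comm, ← Real.rpow_natCast y (m-1), Nat.cast_sub hm, Nat.cast_one]
  rw [hIoi]
  have hhalf : ((m:ℝ)/2) ≠ 0 := by positivity
  have hG : Real.Gamma ((m:ℝ)/2 + 1) = ((m:ℝ)/2) * Real.Gamma ((m:ℝ)/2) :=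
    Real.Gamma_add_one hhalf
  have hGpos : 0 < Real.Gamma ((m:ℝ)/2) := Real.Gamma_pos_of_pos (by positivity)
  have hsqrt : Real.sqrt π ^ m = π ^ ((m:ℝ)/2) := by
    rw [Real.sqrt_eq_rpow, ← Real.rpow_natCast (π ^ ((1:ℝ)/2)) m, ← Real.rpow_mul pi_pos.le]
    ring_nf
  rw [hG, hsqrt, nsmul_eq_mul, smul_eq_mul]
  field_simp

variable {m : ℕ}

noncomputable def gfun (α : Fin m) (x : EuclideanSpace ℝ (Fin m)) : ℝ :=
  Real.exp (-‖x‖) * ((‖x‖ ^ 2)⁻¹ * x α ^ 2)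

lemma coord_sq_le_aux (α : Fin m) (x : EuclideanSpace ℝ (Fin m)) : x α ^ 2 ≤ ‖x‖ ^ 2 := by
  have h := EuclideanSpace.norm_eq x
  have h2 : ‖x‖ ^ 2 = ∑ i, ‖x i‖ ^ 2 := by
    rw [h, Real.sq_sqrt (Finset.sum_nonneg fun i _ => sq_nonneg _)]
  rw [h2]
  have : x α ^ 2 = ‖x α‖ ^ 2 := by rw [Real.norm_eq_abs, sq_abs]
  rw [this]
  exact Finset.single_le_sum (f := fun i => ‖x i‖ ^ 2) (fun i _ => sq_nonneg _) (Finset.mem_univ α)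

lemma gfun_nonneg (α : Fin m) (x : EuclideanSpace ℝ (Fin m)) : 0 ≤ gfun α x := by
  unfold gfun; positivity

lemma gfun_le (α : Fin m) (x : EuclideanSpace ℝ (Fin m)) : gfun α x ≤ Real.exp (-‖x‖) := by
  unfold gfun
  have h : (‖x‖ ^ 2)⁻¹ * x α ^ 2 ≤ 1 := by
    rcases eq_or_ne x 0 with rfl | hx
    · simp
    · have h0 : (0:ℝ) < ‖x‖ := norm_pos_iff.mpr hx
      rw [inv_mul_le_iff₀ (by positivity), mul_one]
      exact coord_sq_le_aux α x
  nlinarith [Real.exp_pos (-‖x‖), mul_nonneg (inv_nonneg.mpr (sq_nonneg ‖x‖)) (sq_nonneg (x α))]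

lemma measurable_gfun (α : Fin m) : Measurable (gfun α) := by
  apply Measurable.mul
  · exact (Real.continuous_exp.comp continuous_norm.neg).measurable
  · exact (((continuous_norm.pow 2).measurable).inv).mul
      (((EuclideanSpace.proj (𝕜 := ℝ) α).continuous.measurable).pow_const 2)

lemma integrable_gfun (α : Fin m) : Integrable (gfun α) := by
  refine (integrable_exp_neg_norm_aux (volume : Measure (EuclideanSpace ℝ (Fin m)))).mono'
    (measurable_gfun α).aestronglyMeasurable ?_
  filter_upwards with x
  rw [Real.norm_eq_abs, abs_of_nonneg (gfun_nonneg α x)]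
  exact gfun_le α x

lemma integral_gfun_swap (α β : Fin m) :
    ∫ x : EuclideanSpace ℝ (Fin m), gfun α x = ∫ x : EuclideanSpace ℝ (Fin m), gfun β x := by
  let e : EuclideanSpace ℝ (Fin m) ≃ₗᵢ[ℝ] EuclideanSpace ℝ (Fin m) :=
    LinearIsometryEquiv.piLpCongrLeft 2 ℝ ℝ (Equiv.swap α β)
  have mp := e.measurePreserving
  have key := mp.integral_comp e.toHomeomorph.measurableEmbedding (gfun α)
  have hfun : ∀ x : EuclideanSpace ℝ (Fin m), gfun α (e x) = gfun β x := by
    intro x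
    have hnorm : ‖e x‖ = ‖x‖ := e.norm_map x
    have hcoord : (e x) α = x β := by
      simp [e, LinearIsometryEquiv.piLpCongrLeft_apply, Equiv.piCongrLeft',
        Equiv.swap_apply_left]
    unfold gfun
    rw [hnorm, hcoord]
  rw [← key]
  simp_rw [hfun]

lemma sum_integral_gfun (hm : 1 ≤ m) :
    ∑ α : Fin m, (∫ x : EuclideanSpace ℝ (Fin m), gfun α x)
      = ∫ x : EuclideanSpace ℝ (Fin m), Real.exp (-‖x‖) := by
  haveI : Nonempty (Fin m) := ⟨⟨0, hm⟩⟩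
  haveI : Nontrivial (EuclideanSpace ℝ (Fin m)) := by
    unfold EuclideanSpace; infer_instance
  rw [← integral_finset_sum _ (fun α _ => integrable_gfun α)]
  apply integral_congr_ae
  have h0 : ∀ᵐ x : EuclideanSpace ℝ (Fin m), x ≠ 0 :=
    ae_iff.mpr (by simp)
  filter_upwards [h0] with x hx
  unfold gfun
  rw [← Finset.mul_sum, ← Finset.mul_sum]
  have hsum : ∑ α : Fin m, x α ^ 2 = ‖x‖ ^ 2 := by
    have h2 : ‖x‖ ^ 2 = ∑ i, ‖x i‖ ^ 2 := by
      rw [EuclideanSpace.norm_eq x,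
        Real.sq_sqrt (Finset.sum_nonneg fun i _ => sq_nonneg _)]
    rw [h2]
    congr 1; funext i; rw [Real.norm_eq_abs, sq_abs]
  have hx0 : (0:ℝ) < ‖x‖ := norm_pos_iff.mpr hx
  rw [hsum, inv_mul_cancel₀ (by positivity : (‖x‖^2 : ℝ) ≠ 0), mul_one]

lemma integral_gfun_eq (hm : 1 ≤ m) (α : Fin m) :
    ∫ x : EuclideanSpace ℝ (Fin m), gfun α x
      = (∫ x : EuclideanSpace ℝ (Fin m), Real.exp (-‖x‖)) / m := by
  have h1 : ∑ β : Fin m, (∫ x : EuclideanSpace ℝ (Fin m), gfun β x)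
      = (m : ℝ) * ∫ x : EuclideanSpace ℝ (Fin m), gfun α x := by
    rw [Finset.sum_congr rfl (fun β _ => integral_gfun_swap β α)]
    simp [Finset.sum_const, mul_comm]
  have h2 := sum_integral_gfun hm
  rw [h1] at h2
  field_simp [show (m:ℝ) ≠ 0 by positivity] at h2 ⊢
  linarith

end helpers



/-- The second heat-trace coefficient `a₁`: with `w₁ = |ξ′|`, `H = Σ κ_α`,
`(i/(2π)^n) ∫ ∮ e^{−τ} (w₁−τ)^{−2} ((1/2)(H+φ_n) − (1/2) w₁^{−2} Σ κ_α ξ_α²) dτ dξ′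
 = (ω_{n−2}Γ(n−1)/(2(2π)^{n−1})) ((n−2)H/(n−1) + φ_n)`. -/
theorem stmt_17 (n : ℕ) (hn : 2 ≤ n) (κ : Fin (n - 1) → ℝ) (φn : ℝ)
    (r : ℝ) (hr : 0 < r) :
    (Complex.I / (((2 * Real.pi) ^ n : ℝ) : ℂ)) *
        ∫ ξ : EuclideanSpace ℝ (Fin (n - 1)),
          (∮ τ in C((‖ξ‖ : ℂ), r),
            Complex.exp (-τ) * (((‖ξ‖ : ℂ) - τ) ^ (-2 : ℤ) *
              ((1/2 : ℂ) * (((∑ α, κ α : ℝ) : ℂ) + (φn : ℂ))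
                - (1/2 : ℂ) * ((‖ξ‖ : ℂ)) ^ (-2 : ℤ) *
                    ∑ α, ((κ α : ℝ) : ℂ) * ((ξ α : ℝ) : ℂ) ^ 2)))
      = ((((2 * Real.pi ^ (((n : ℝ) - 1) / 2) / Real.Gamma (((n : ℝ) - 1) / 2)) *
            Real.Gamma ((n : ℝ) - 1) / (2 * (2 * Real.pi) ^ (n - 1))) *
          (((n : ℝ) - 2) * (∑ α, κ α) / ((n : ℝ) - 1) + φn) : ℝ) : ℂ) := by
  have hm : 1 ≤ n - 1 := by omega
  have hc : (((n - 1 : ℕ)):ℝ) = (n:ℝ) - 1 := by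
    push_cast [Nat.cast_sub (by omega : 1 ≤ n)]; ring
  set H : ℝ := ∑ α, κ α with hH
  set F : EuclideanSpace ℝ (Fin (n - 1)) → ℝ := fun ξ =>
    Real.exp (-‖ξ‖) * ((1/2) * (H + φn) - (1/2) * (‖ξ‖ ^ 2)⁻¹ * ∑ α, κ α * ξ α ^ 2) with hF
  -- Step 1: compute the contour integral pointwise
  have step1 : ∀ ξ : EuclideanSpace ℝ (Fin (n - 1)),
      (∮ τ in C((‖ξ‖ : ℂ), r),
        Complex.exp (-τ) * (((‖ξ‖ : ℂ) - τ) ^ (-2 : ℤ) *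
          ((1/2 : ℂ) * ((H : ℂ) + (φn : ℂ))
            - (1/2 : ℂ) * ((‖ξ‖ : ℂ)) ^ (-2 : ℤ) *
                ∑ α, ((κ α : ℝ) : ℂ) * ((ξ α : ℝ) : ℂ) ^ 2)))
      = -(2 * π * Complex.I) * ((F ξ : ℝ) : ℂ) := by
    intro ξ
    rw [contour_const_aux ‖ξ‖ hr]
    have hz : ((‖ξ‖ : ℂ)) ^ (-2 : ℤ) = (((‖ξ‖ ^ 2 : ℝ) : ℂ))⁻¹ := by
      rw [show ((-2:ℤ)) = (-(2:ℕ) : ℤ) from rfl, zpow_neg, zpow_natCast]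
      push_cast
      ring
    rw [hz, hF]
    push_cast [Complex.ofReal_exp]
    ring
  simp only [step1]
  -- Step 2: pull out the constant and reduce to a real integral
  have hOF : (∫ a : EuclideanSpace ℝ (Fin (n - 1)), ((F a : ℝ) : ℂ))
      = (((∫ a : EuclideanSpace ℝ (Fin (n - 1)), F a) : ℝ) : ℂ) := integral_ofReal
  rw [integral_const_mul, hOF]
  -- Step 3: compute the real integral
  have hI₀ := radial_exp_aux (n - 1) hm
  set ω : ℝ := 2 * π ^ ((((n - 1 : ℕ)):ℝ)/2) / Real.Gamma ((((n - 1 : ℕ)):ℝ)/2) with hω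
  have hFg : ∀ ξ : EuclideanSpace ℝ (Fin (n - 1)),
      F ξ = (1/2) * (H + φn) * Real.exp (-‖ξ‖) - ∑ α, (κ α / 2) * gfun α ξ := by
    intro ξ
    rw [hF]
    have : ∑ α, (κ α / 2) * gfun α ξ
        = Real.exp (-‖ξ‖) * ((1/2) * (‖ξ‖ ^ 2)⁻¹ * ∑ α, κ α * ξ α ^ 2) := by
      simp only [Finset.mul_sum]
      apply Finset.sum_congr rfl
      intro α _
      unfold gfun
      ring
    rw [this]
    ring
  have hexpint : Integrable (fun x : EuclideanSpace ℝ (Fin (n - 1)) => Real.exp (-‖x‖)) :=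
    integrable_exp_neg_norm_aux _
  have hS : (∫ ξ : EuclideanSpace ℝ (Fin (n - 1)), F ξ)
      = (1/2) * (H + φn) * (ω * Real.Gamma (((n - 1 : ℕ)):ℝ))
        - (H / 2) * ((ω * Real.Gamma (((n - 1 : ℕ)):ℝ)) / ((n - 1 : ℕ):ℝ)) := by
    calc (∫ ξ : EuclideanSpace ℝ (Fin (n - 1)), F ξ)
        = ∫ ξ : EuclideanSpace ℝ (Fin (n - 1)),
            ((1/2) * (H + φn) * Real.exp (-‖ξ‖) - ∑ α, (κ α / 2) * gfun α ξ) := by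
          exact integral_congr_ae (Filter.Eventually.of_forall hFg)
      _ = (1/2) * (H + φn) * (∫ ξ : EuclideanSpace ℝ (Fin (n - 1)), Real.exp (-‖ξ‖))
            - ∑ α, (κ α / 2) * (∫ ξ : EuclideanSpace ℝ (Fin (n - 1)), gfun α ξ) := by
          rw [integral_sub (hexpint.const_mul _)
            (integrable_finset_sum _ (fun α _ => (integrable_gfun α).const_mul _)),
            integral_const_mul, integral_finset_sum _ (fun α _ => (integrable_gfun α).const_mul _)]
          congr 1
          exact Finset.sum_congr rfl (fun α _ => integral_const_mul _ _)
      _ = (1/2) * (H + φn) * (ω * Real.Gamma (((n - 1 : ℕ)):ℝ))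
            - (H / 2) * ((ω * Real.Gamma (((n - 1 : ℕ)):ℝ)) / ((n - 1 : ℕ):ℝ)) := by
          rw [hI₀]
          congr 1
          have hJ : ∀ α : Fin (n - 1), (∫ ξ : EuclideanSpace ℝ (Fin (n - 1)), gfun α ξ)
              = (ω * Real.Gamma (((n - 1 : ℕ)):ℝ)) / ((n - 1 : ℕ):ℝ) := by
            intro α
            rw [integral_gfun_eq hm α, hI₀]
          rw [Finset.sum_congr rfl (fun α _ => by rw [hJ α]),
            ← Finset.sum_mul, ← Finset.sum_div, ← hH]
  rw [hS]
  -- Step 4: final complex/real algebra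
  have hmpos : (0:ℝ) < ((n - 1 : ℕ):ℝ) := by
    have : 0 < n - 1 := by omega
    positivity
  have hπ : (0:ℝ) < π := pi_pos
  have hgen : ∀ x X φ' A : ℝ, 0 < x → (0:ℝ) < A →
      (2 * π) * ((1/2) * (H + φ') * X - (H/2) * (X / x)) / ((2 * π) * A)
        = X / (2 * A) * ((x - 1) * H / x + φ') := by
    intro x X φ' A hx hA
    field_simp
    ring
  have hfinal : (2 * π) * ((1/2) * (H + φn) * (ω * Real.Gamma (((n - 1 : ℕ)):ℝ))
        - (H / 2) * ((ω * Real.Gamma (((n - 1 : ℕ)):ℝ)) / ((n - 1 : ℕ):ℝ))) / (2 * π) ^ n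
      = ω * Real.Gamma (((n - 1 : ℕ)):ℝ) / (2 * (2 * π) ^ (n - 1))
        * (((n:ℝ) - 2) * H / (((n - 1 : ℕ)):ℝ) + φn) := by
    have hn2 : ((n:ℝ) - 2) = ((n - 1 : ℕ):ℝ) - 1 := by rw [hc]; ring
    have hpow : ((2:ℝ) * π) ^ n = (2 * π) * (2 * π) ^ (n - 1) := by
      rw [← pow_succ']
      congr 1
      omega
    rw [hn2, hpow]
    exact hgen _ _ _ _ hmpos (by positivity)
  calc Complex.I / (((2 * π) ^ n : ℝ) : ℂ) *
        (-(2 * ↑π * Complex.I) * (((1/2) * (H + φn) * (ω * Real.Gamma (((n - 1 : ℕ)):ℝ))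
          - (H / 2) * ((ω * Real.Gamma (((n - 1 : ℕ)):ℝ)) / ((n - 1 : ℕ):ℝ)) : ℝ) : ℂ))
      = (((2 * π) * ((1/2) * (H + φn) * (ω * Real.Gamma (((n - 1 : ℕ)):ℝ))
          - (H / 2) * ((ω * Real.Gamma (((n - 1 : ℕ)):ℝ)) / ((n - 1 : ℕ):ℝ))) / (2 * π) ^ n
            : ℝ) : ℂ) := by
        push_cast
        field_simp
        ring_nf
        rw [Complex.I_sq]
        ring
    _ = _ := by
        rw [hfinal]
        have : ω * Real.Gamma (((n - 1 : ℕ)):ℝ) / (2 * (2 * π) ^ (n - 1))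
              * (((n:ℝ) - 2) * H / (((n - 1 : ℕ)):ℝ) + φn)
            = 2 * π ^ (((n:ℝ) - 1) / 2) / Real.Gamma (((n:ℝ) - 1) / 2)
              * Real.Gamma ((n:ℝ) - 1) / (2 * (2 * π) ^ (n - 1))
              * (((n:ℝ) - 2) * H / ((n:ℝ) - 1) + φn) := by
          rw [hω, hc]
        rw [this]
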